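/- Let ε_1, ..., ε_N be i.i.d. real random variables with distribution function F. Let F̂_{a,b}(x) = (b−a)^{-1} Σ_{t=a+1}^{b} 1{ε_t ≤ x} for integers 0 ≤ a < b ≤ N. If (a_n, b_n) and (â_n, b̂_n) are (possibly random) index pairs with |â_n − a_n| + |b̂_n − b_n| = o_P(b_n − a_n) and b_n − a_n → ∞, then sup_x | F̂_{â_n, b̂_n}(x) − F̂_{a_n, b_n}(x) | = o_P(1); consequently sup_x | F̂_{â_n, b̂_n}(x) − F(x) | = o_P(1). -/

import Mathlib

open MeasureTheory ProbabilityTheory Finset Filter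

lemma aux_T_diff (f : ℕ → ℝ) (hf0 : ∀ t, 0 ≤ f t) (hf1 : ∀ t, f t ≤ 1) (m m' : ℕ) :
    |(∑ t ∈ Finset.Ioc 0 m', f t) - ∑ t ∈ Finset.Ioc 0 m, f t| ≤ |(m' : ℝ) - m| := by
  wlog h : m ≤ m' generalizing m m'
  · rw [abs_sub_comm, abs_sub_comm ((m':ℝ))]
    exact this m' m (le_of_not_ge h)
  have hsub : (∑ t ∈ Finset.Ioc 0 m, f t) + ∑ t ∈ Finset.Ioc m m', f t
      = ∑ t ∈ Finset.Ioc 0 m', f t := Finset.sum_Ioc_consecutive f (Nat.zero_le m) h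
  have h0 : (0:ℝ) ≤ ∑ t ∈ Finset.Ioc m m', f t := Finset.sum_nonneg fun t _ => hf0 t
  have h1 : (∑ t ∈ Finset.Ioc m m', f t) ≤ ((m' : ℝ) - m) := by
    have := Finset.sum_le_card_nsmul (Finset.Ioc m m') f 1 (fun t _ => hf1 t)
    rw [Nat.card_Ioc] at this
    simp only [nsmul_eq_mul, mul_one] at this
    calc (∑ t ∈ Finset.Ioc m m', f t) ≤ ((m' - m : ℕ) : ℝ) := this
    _ = (m' : ℝ) - m := by rw [Nat.cast_sub h]
  rw [← hsub]
  rw [abs_of_nonneg (by linarith), abs_of_nonneg (sub_nonneg.2 (by exact_mod_cast h))]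
  linarith

lemma aux_window_sum (f : ℕ → ℝ) (s e : ℕ) (hse : s ≤ e) :
    ∑ t ∈ Finset.Icc (s+1) e, f t
      = (∑ t ∈ Finset.Ioc 0 e, f t) - ∑ t ∈ Finset.Ioc 0 s, f t := by
  rw [Finset.Icc_add_one_left_eq_Ioc]
  have := Finset.sum_Ioc_consecutive f (Nat.zero_le s) hse
  linarith

lemma aux_pert (f : ℕ → ℝ) (hf0 : ∀ t, 0 ≤ f t) (hf1 : ∀ t, f t ≤ 1)
    (s e s' e' : ℕ) (hse : s < e) (δ : ℝ) (hδ0 : 0 < δ) (hδ : δ ≤ 1/3)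
    (hΔ : |(s':ℝ) - s| + |(e':ℝ) - e| ≤ δ * ((e:ℝ) - s)) :
    |((e':ℝ) - s')⁻¹ * (∑ t ∈ Finset.Icc (s'+1) e', f t)
      - ((e:ℝ) - s)⁻¹ * (∑ t ∈ Finset.Icc (s+1) e, f t)| ≤ 3 * δ := by
  set Δ : ℝ := |(s':ℝ) - s| + |(e':ℝ) - e| with hΔdef
  have hΔ0 : 0 ≤ Δ := add_nonneg (abs_nonneg _) (abs_nonneg _)
  have hm : (0:ℝ) < (e:ℝ) - s := by
    have : (s:ℝ) < e := by exact_mod_cast hse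
    linarith
  set m : ℝ := (e:ℝ) - s with hmdef
  set m' : ℝ := (e':ℝ) - s' with hm'def
  have hm'ge : 2/3 * m ≤ m' := by
    have h1 : (s':ℝ) - s ≤ |(s':ℝ) - s| := le_abs_self _
    have h2 : -((e':ℝ) - e) ≤ |(e':ℝ) - e| := neg_le_abs _
    have : m - Δ ≤ m' := by
      simp only [hmdef, hm'def, hΔdef]; linarith
    nlinarith
  have hm'pos : 0 < m' := by nlinarith
  have hs'e' : s' ≤ e' := by
    have : (s':ℝ) < e' := by simp only [hm'def] at hm'pos; linarith
    exact_mod_cast this.le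
  set A : ℝ := ∑ t ∈ Finset.Icc (s'+1) e', f t with hA
  set B : ℝ := ∑ t ∈ Finset.Icc (s+1) e, f t with hB
  have hAB : |A - B| ≤ Δ := by
    rw [hA, hB, aux_window_sum f s' e' hs'e', aux_window_sum f s e hse.le]
    have h1 := aux_T_diff f hf0 hf1 e e'
    have h2 := aux_T_diff f hf0 hf1 s s'
    calc |(∑ t ∈ Finset.Ioc 0 e', f t) - (∑ t ∈ Finset.Ioc 0 s', f t)
          - ((∑ t ∈ Finset.Ioc 0 e, f t) - ∑ t ∈ Finset.Ioc 0 s, f t)|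
        ≤ |(∑ t ∈ Finset.Ioc 0 e', f t) - ∑ t ∈ Finset.Ioc 0 e, f t|
          + |(∑ t ∈ Finset.Ioc 0 s', f t) - ∑ t ∈ Finset.Ioc 0 s, f t| := by
          have := abs_sub (((∑ t ∈ Finset.Ioc 0 e', f t) - ∑ t ∈ Finset.Ioc 0 e, f t))
            (((∑ t ∈ Finset.Ioc 0 s', f t) - ∑ t ∈ Finset.Ioc 0 s, f t))
          refine le_trans (le_of_eq ?_) this
          congr 1
          ring
      _ ≤ |(e':ℝ) - e| + |(s':ℝ) - s| := add_le_add h1 h2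
      _ = Δ := by rw [hΔdef]; ring
  have hB0 : 0 ≤ B := Finset.sum_nonneg fun t _ => hf0 t
  have hBm : B ≤ m := by
    have := Finset.sum_le_card_nsmul (Finset.Icc (s+1) e) f 1 (fun t _ => hf1 t)
    rw [Nat.card_Icc] at this
    simp only [nsmul_eq_mul, mul_one] at this
    have hc : ((e + 1 - (s+1) : ℕ) : ℝ) = m := by
      rw [hmdef]
      have : e + 1 - (s+1) = e - s := by omega
      rw [this, Nat.cast_sub hse.le]
    rw [hc] at this; exact this
  have hmm' : |m - m'| ≤ Δ := by
    have h1 : -((s':ℝ) - s) ≤ |(s':ℝ) - s| := neg_le_abs _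
    have h1' : ((s':ℝ) - s) ≤ |(s':ℝ) - s| := le_abs_self _
    have h2 : -((e':ℝ) - e) ≤ |(e':ℝ) - e| := neg_le_abs _
    have h2' : ((e':ℝ) - e) ≤ |(e':ℝ) - e| := le_abs_self _
    rw [abs_le]; constructor <;> [skip; skip] <;>
      (simp only [hmdef, hm'def, hΔdef]; linarith)
  have key : m'⁻¹ * A - m⁻¹ * B = (A * m - B * m') / (m' * m) := by
    field_simp
  rw [key, abs_div, abs_of_pos (mul_pos hm'pos hm)]
  rw [div_le_iff₀ (mul_pos hm'pos hm)]
  have habs : |A * m - B * m'| ≤ 2 * Δ * m := by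
    calc |A * m - B * m'| = |(A - B) * m + B * (m - m')| := by ring_nf
      _ ≤ |(A - B) * m| + |B * (m - m')| := abs_add_le _ _
      _ = |A - B| * m + B * |m - m'| := by
          rw [abs_mul, abs_mul, abs_of_pos hm, abs_of_nonneg hB0]
      _ ≤ Δ * m + m * Δ := add_le_add (mul_le_mul_of_nonneg_right hAB hm.le)
          (mul_le_mul hBm hmm' (abs_nonneg _) hm.le)
      _ = 2 * Δ * m := by ring
  calc |A * m - B * m'| ≤ 2 * Δ * m := habs
    _ ≤ 3 * δ * (m' * m) := by nlinarith

lemma aux_integrable {Ω : Type*} [MeasurableSpace Ω] (μ : Measure Ω) [IsProbabilityMeasure μ]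
    (f : Ω → ℝ) (hf : Measurable f) (C : ℝ) (hb : ∀ ω, |f ω| ≤ C) : Integrable f μ :=
  ⟨hf.aestronglyMeasurable, HasFiniteIntegral.of_bounded (C := C)
    (ae_of_all _ fun ω => by rw [Real.norm_eq_abs]; exact hb ω)⟩

lemma aux_cheb {Ω : Type*} [MeasurableSpace Ω] (μ : Measure Ω) [IsProbabilityMeasure μ]
    (ε : ℕ → Ω → ℝ) (hmeas : ∀ t, Measurable (ε t))
    (hindep : iIndepFun ε μ)
    (S : Set ℝ) (hS : MeasurableSet S)
    (p : ℝ) (hp : ∀ t, (μ (ε t ⁻¹' S)).toReal = p)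
    (s e : ℕ) (hse : s < e) (η : ℝ) (hη : 0 < η) :
    μ {ω | |((e:ℝ) - s)⁻¹ * (∑ t ∈ Finset.Icc (s+1) e, S.indicator (fun _ => (1:ℝ)) (ε t ω)) - p| > η}
      ≤ ENNReal.ofReal (((e:ℝ) - s)⁻¹ * η⁻¹ * η⁻¹) := by
  classical
  set m : ℝ := (e:ℝ) - s with hmdef
  have hm : (0:ℝ) < m := by
    have : (s:ℝ) < e := by exact_mod_cast hse
    simp only [hmdef]; linarith
  set I : Finset ℕ := Finset.Icc (s+1) e with hI
  have hcard : (I.card : ℝ) = m := by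
    rw [hI, Nat.card_Icc]
    have : e + 1 - (s+1) = e - s := by omega
    rw [this, Nat.cast_sub hse.le, hmdef]
  set X : ℕ → Ω → ℝ := fun t ω => S.indicator (fun _ => (1:ℝ)) (ε t ω) with hX
  set Y : ℕ → Ω → ℝ := fun t ω => X t ω - p with hY
  have hp01 : 0 ≤ p ∧ p ≤ 1 := by
    rw [← hp 0]
    constructor
    · exact ENNReal.toReal_nonneg
    · exact ENNReal.toReal_le_of_le_ofReal zero_le_one (by simpa using prob_le_one)
  have hX01 : ∀ t ω, X t ω = 0 ∨ X t ω = 1 := by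
    intro t ω
    simp only [hX, Set.indicator_apply]
    split_ifs <;> simp
  have hXmeas : ∀ t, Measurable (X t) := by
    intro t
    exact ((measurable_const.indicator hS).comp (hmeas t))
  have hYmeas : ∀ t, Measurable (Y t) := fun t => (hXmeas t).sub measurable_const
  have hYbd : ∀ t ω, |Y t ω| ≤ 1 := by
    intro t ω
    rw [hY]; simp only
    rcases hX01 t ω with h | h <;> rw [h, abs_le] <;> constructor <;>
      linarith [hp01.1, hp01.2]
  have hYint : ∀ t, Integrable (Y t) μ := fun t =>
    aux_integrable μ _ (hYmeas t) 1 (hYbd t)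
  have hEX : ∀ t, ∫ ω, X t ω ∂μ = p := by
    intro t
    have : X t = (ε t ⁻¹' S).indicator (fun _ => (1:ℝ)) := by
      ext ω
      simp only [hX, Set.indicator_apply, Set.mem_preimage]
    rw [this, MeasureTheory.integral_indicator_const (1:ℝ) (hmeas t hS)]
    simp [hp t]
    exact hp t
  have hEY : ∀ t, ∫ ω, Y t ω ∂μ = 0 := by
    intro t
    rw [hY]
    simp only
    rw [integral_sub (aux_integrable μ _ (hXmeas t) 1 ?_) (integrable_const p), hEX t,
      integral_const]
    · simp
    · intro ω; rcases hX01 t ω with h | h <;> rw [h] <;> simp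
  have hprodint : ∀ t u, Integrable (fun ω => Y t ω * Y u ω) μ := by
    intro t u
    refine aux_integrable μ _ ((hYmeas t).mul (hYmeas u)) 1 ?_
    intro ω
    rw [abs_mul]
    exact mul_le_one₀ (hYbd t ω) (abs_nonneg _) (hYbd u ω)
  have hoff : ∀ t u, t ≠ u → ∫ ω, Y t ω * Y u ω ∂μ = 0 := by
    intro t u htu
    have hind : IndepFun (Y t) (Y u) μ := by
      have h1 : IndepFun (ε t) (ε u) μ := hindep.indepFun htu
      have hφ : Measurable (fun r : ℝ => S.indicator (fun _ => (1:ℝ)) r - p) :=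
        (measurable_const.indicator hS).sub measurable_const
      exact h1.comp hφ hφ
    have := hind.integral_mul_eq_mul_integral (hYint t).aestronglyMeasurable (hYint u).aestronglyMeasurable
    calc ∫ ω, Y t ω * Y u ω ∂μ = ∫ ω, (Y t * Y u) ω ∂μ := rfl
      _ = (∫ ω, Y t ω ∂μ) * ∫ ω, Y u ω ∂μ := this
      _ = 0 := by rw [hEY t, hEY u, mul_zero]
  have hdiag : ∀ t, ∫ ω, Y t ω * Y t ω ∂μ ≤ 1 := by
    intro t
    calc ∫ ω, Y t ω * Y t ω ∂μ ≤ ∫ ω, (1:ℝ) ∂μ := by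
          refine integral_mono (hprodint t t) (integrable_const 1) ?_
          intro ω
          calc Y t ω * Y t ω = |Y t ω| * |Y t ω| := (abs_mul_abs_self _).symm
            _ ≤ 1 := mul_le_one₀ (hYbd t ω) (abs_nonneg _) (hYbd t ω)
      _ = 1 := by simp
  set Z : Ω → ℝ := fun ω => ∑ t ∈ I, Y t ω with hZ
  have hZmeas : Measurable Z := Finset.measurable_sum I fun t _ => hYmeas t
  have hZbd : ∀ ω, |Z ω| ≤ (I.card : ℝ) := by
    intro ω
    calc |Z ω| ≤ ∑ t ∈ I, |Y t ω| := Finset.abs_sum_le_sum_abs _ _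
      _ ≤ ∑ t ∈ I, (1:ℝ) := Finset.sum_le_sum fun t _ => hYbd t ω
      _ = (I.card : ℝ) := by simp
  have hZ2int : Integrable (fun ω => Z ω * Z ω) μ := by
    refine aux_integrable μ _ (hZmeas.mul hZmeas) ((I.card:ℝ) * I.card) ?_
    intro ω
    rw [abs_mul]
    exact mul_le_mul (hZbd ω) (hZbd ω) (abs_nonneg _) (Nat.cast_nonneg _)
  have hZ2 : ∫ ω, Z ω * Z ω ∂μ ≤ m := by
    have hexp : ∀ ω, Z ω * Z ω = ∑ t ∈ I, ∑ u ∈ I, Y t ω * Y u ω := by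
      intro ω
      rw [hZ]
      simp only
      rw [Finset.sum_mul_sum]
    have h1 : ∫ ω, Z ω * Z ω ∂μ = ∑ t ∈ I, ∑ u ∈ I, ∫ ω, Y t ω * Y u ω ∂μ := by
      rw [show (fun ω => Z ω * Z ω) = fun ω => ∑ t ∈ I, ∑ u ∈ I, Y t ω * Y u ω from
        funext hexp]
      rw [integral_finset_sum I fun t _ => integrable_finset_sum I fun u _ => hprodint t u]
      exact Finset.sum_congr rfl fun t _ =>
        integral_finset_sum I fun u _ => hprodint t u
    rw [h1]
    have h2 : ∀ t ∈ I, ∑ u ∈ I, ∫ ω, Y t ω * Y u ω ∂μ ≤ 1 := by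
      intro t ht
      rw [Finset.sum_eq_single_of_mem t ht (fun u _ hut => hoff t u (Ne.symm hut))]
      exact hdiag t
    calc ∑ t ∈ I, ∑ u ∈ I, ∫ ω, Y t ω * Y u ω ∂μ ≤ ∑ t ∈ I, (1:ℝ) :=
          Finset.sum_le_sum h2
      _ = (I.card : ℝ) := by simp
      _ = m := hcard
  -- event inclusion
  have hincl : {ω | |m⁻¹ * (∑ t ∈ I, X t ω) - p| > η}
      ⊆ {ω | (m * η) * (m * η) ≤ Z ω * Z ω} := by
    intro ω hω
    simp only [Set.mem_setOf_eq] at hω ⊢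
    have hZeq : Z ω = (∑ t ∈ I, X t ω) - m * p := by
      rw [hZ]
      simp only [hY]
      rw [Finset.sum_sub_distrib, Finset.sum_const, nsmul_eq_mul, hcard]
    have h2 : m⁻¹ * (∑ t ∈ I, X t ω) - p = m⁻¹ * Z ω := by
      rw [hZeq]; field_simp
    rw [h2, abs_mul, abs_of_pos (inv_pos.2 hm)] at hω
    have h3 : m * η < |Z ω| := by
      rw [inv_mul_eq_div, gt_iff_lt, lt_div_iff₀ hm] at hω
      linarith
    calc (m * η) * (m * η) ≤ |Z ω| * |Z ω| :=
        mul_le_mul h3.le h3.le (by positivity) (abs_nonneg _)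
      _ = Z ω * Z ω := abs_mul_abs_self _
  -- Markov
  have hmarkov := mul_meas_ge_le_integral_of_nonneg
    (ae_of_all μ fun ω => mul_self_nonneg (Z ω)) hZ2int ((m * η) * (m * η))
  have hfin : μ {ω | (m * η) * (m * η) ≤ Z ω * Z ω} ≠ ⊤ := measure_ne_top μ _
  have hTR : (μ {ω | (m * η) * (m * η) ≤ Z ω * Z ω}).toReal ≤ m⁻¹ * η⁻¹ * η⁻¹ := by
    have hpos : (0:ℝ) < (m * η) * (m * η) := by positivity
    have h1 : (μ {ω | (m * η) * (m * η) ≤ Z ω * Z ω}).toReal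
        ≤ (∫ ω, Z ω * Z ω ∂μ) / ((m * η) * (m * η)) := by
      rw [le_div_iff₀ hpos]
      rw [mul_comm]; exact hmarkov
    have h2 : (∫ ω, Z ω * Z ω ∂μ) / ((m * η) * (m * η)) ≤ m / ((m * η) * (m * η)) :=
      div_le_div_of_nonneg_right hZ2 hpos.le
    have h3 : m / ((m * η) * (m * η)) = m⁻¹ * η⁻¹ * η⁻¹ := by
      field_simp
    linarith
  calc μ {ω | |m⁻¹ * (∑ t ∈ I, X t ω) - p| > η}
      ≤ μ {ω | (m * η) * (m * η) ≤ Z ω * Z ω} := measure_mono hincl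
    _ = ENNReal.ofReal ((μ {ω | (m * η) * (m * η) ≤ Z ω * Z ω}).toReal) :=
        (ENNReal.ofReal_toReal hfin).symm
    _ ≤ ENNReal.ofReal (m⁻¹ * η⁻¹ * η⁻¹) := ENNReal.ofReal_le_ofReal hTR

lemma exists_quantile {Ω : Type*} [MeasurableSpace Ω] (μ : Measure Ω) [IsProbabilityMeasure μ]
    (X : Ω → ℝ) (hX : Measurable X) (c : ℝ) (hc0 : 0 < c) (hc1 : c < 1) :
    ∃ q : ℝ, c ≤ (μ {ω | X ω ≤ q}).toReal ∧ (μ {ω | X ω < q}).toReal ≤ c := by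
  classical
  set Fr : ℝ → ℝ := fun x => (μ {ω | X ω ≤ x}).toReal with hFr
  have hfin : ∀ s : Set Ω, μ s ≠ ⊤ := fun s => measure_ne_top μ s
  have hFrmono : Monotone Fr := by
    intro x y hxy
    exact ENNReal.toReal_mono (hfin _) (measure_mono fun ω (h : X ω ≤ x) => h.trans hxy)
  -- nonempty
  have hne : ∃ x : ℝ, c ≤ Fr x := by
    by_contra hcon
    push_neg at hcon
    have hU : (⋃ n : ℕ, {ω | X ω ≤ (n:ℝ)}) = Set.univ := by
      ext ω; simp only [Set.mem_iUnion, Set.mem_setOf_eq, Set.mem_univ, iff_true]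
      obtain ⟨n, hn⟩ := exists_nat_ge (X ω)
      exact ⟨n, hn⟩
    have hmono : Monotone (fun n : ℕ => {ω | X ω ≤ (n:ℝ)}) := by
      intro i j hij ω (h : X ω ≤ (i:ℝ))
      exact h.trans (by exact_mod_cast hij)
    have := hmono.measure_iUnion (μ := μ)
    rw [hU, measure_univ] at this
    have hle : (⨆ n : ℕ, μ {ω | X ω ≤ (n:ℝ)}) ≤ ENNReal.ofReal c := by
      refine iSup_le fun n => ?_
      rw [ENNReal.le_ofReal_iff_toReal_le (hfin _) hc0.le]
      exact (hcon n).le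
    rw [← this] at hle
    have : (1 : ENNReal) < 1 := lt_of_le_of_lt hle (ENNReal.ofReal_lt_one.2 hc1)
    exact absurd this (lt_irrefl _)
  -- bounded below
  have hbdd0 : ∃ x0 : ℝ, Fr x0 < c := by
    by_contra hcon
    push_neg at hcon
    have hI : (⋂ n : ℕ, {ω | X ω ≤ -(n:ℝ)}) = ∅ := by
      ext ω
      simp only [Set.mem_iInter, Set.mem_setOf_eq, Set.mem_empty_iff_false, iff_false]
      push_neg
      obtain ⟨n, hn⟩ := exists_nat_gt (-(X ω))
      exact ⟨n, by linarith⟩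
    have hanti : Antitone (fun n : ℕ => {ω | X ω ≤ -(n:ℝ)}) := by
      intro i j hij ω (h : X ω ≤ -(j:ℝ))
      refine h.trans ?_
      simp only [neg_le_neg_iff]
      exact_mod_cast hij
    have := hanti.measure_iInter (fun n => (hX measurableSet_Iic).nullMeasurableSet)
      ⟨0, hfin _⟩
    rw [hI, measure_empty] at this
    have hge : ENNReal.ofReal c ≤ (⨅ n : ℕ, μ {ω | X ω ≤ -(n:ℝ)}) := by
      refine le_iInf fun n => ?_
      rw [ENNReal.ofReal_le_iff_le_toReal (hfin _)]
      exact hcon _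
    rw [← this] at hge
    have : (0:ℝ) < c := hc0
    simp only [nonpos_iff_eq_zero, le_zero_iff] at hge
    rw [ENNReal.ofReal_eq_zero] at hge
    linarith
  obtain ⟨x0, hx0⟩ := hbdd0
  set Q : Set ℝ := {x | c ≤ Fr x} with hQ
  have hQne : Q.Nonempty := hne
  have hQbdd : BddBelow Q := by
    refine ⟨x0, fun y hy => ?_⟩
    by_contra hlt
    push_neg at hlt
    exact absurd (le_trans hy (hFrmono hlt.le)) (not_le.2 hx0)
  set q : ℝ := sInf Q with hq
  refine ⟨q, ?_, ?_⟩
  · -- c ≤ Fr q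
    have hset : {ω | X ω ≤ q} = ⋂ n : ℕ, {ω | X ω ≤ q + 1/(n+1)} := by
      ext ω
      simp only [Set.mem_iInter, Set.mem_setOf_eq]
      constructor
      · intro h n
        have : (0:ℝ) < 1/(n+1) := by positivity
        linarith
      · intro h
        by_contra hlt
        push_neg at hlt
        obtain ⟨n, hn⟩ := exists_nat_one_div_lt (show (0:ℝ) < X ω - q by linarith)
        have := h n
        linarith
    have hanti : Antitone (fun n : ℕ => {ω | X ω ≤ q + 1/((n:ℝ)+1)}) := by
      intro i j hij ω (h : X ω ≤ q + 1/((j:ℝ)+1))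
      refine h.trans (add_le_add_right ?_ q)
      apply one_div_le_one_div_of_le (by positivity)
      have : (i:ℝ) ≤ j := by exact_mod_cast hij
      linarith
    have hInter := hanti.measure_iInter
      (fun n => (hX measurableSet_Iic).nullMeasurableSet) ⟨0, hfin _⟩
    have heach : ∀ n : ℕ, ENNReal.ofReal c ≤ μ {ω | X ω ≤ q + 1/((n:ℝ)+1)} := by
      intro n
      have hpos : (0:ℝ) < 1/((n:ℝ)+1) := by positivity
      obtain ⟨z, hzQ, hz⟩ := (csInf_lt_iff hQbdd hQne).1
        (show sInf Q < q + 1/((n:ℝ)+1) by rw [← hq]; linarith)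
      rw [ENNReal.ofReal_le_iff_le_toReal (hfin _)]
      exact le_trans hzQ (hFrmono hz.le)
    have : ENNReal.ofReal c ≤ μ {ω | X ω ≤ q} := by
      rw [hset]
      calc ENNReal.ofReal c ≤ ⨅ n : ℕ, μ {ω | X ω ≤ q + 1/((n:ℝ)+1)} := le_iInf heach
        _ = μ (⋂ n : ℕ, {ω | X ω ≤ q + 1/((n:ℝ)+1)}) := hInter.symm
    rw [← ENNReal.ofReal_le_iff_le_toReal (hfin _)] at *
    exact this
  · -- Fr strict side: (μ {X < q}).toReal ≤ c
    have hset : {ω | X ω < q} = ⋃ n : ℕ, {ω | X ω ≤ q - 1/((n:ℝ)+1)} := by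
      ext ω
      simp only [Set.mem_iUnion, Set.mem_setOf_eq]
      constructor
      · intro h
        obtain ⟨n, hn⟩ := exists_nat_one_div_lt (show (0:ℝ) < q - X ω by linarith)
        exact ⟨n, by linarith⟩
      · rintro ⟨n, hn⟩
        have : (0:ℝ) < 1/((n:ℝ)+1) := by positivity
        linarith
    have hmono : Monotone (fun n : ℕ => {ω | X ω ≤ q - 1/((n:ℝ)+1)}) := by
      intro i j hij ω (h : X ω ≤ q - 1/((i:ℝ)+1))
      refine h.trans (sub_le_sub_left ?_ q)
      apply one_div_le_one_div_of_le (by positivity)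
      have : (i:ℝ) ≤ j := by exact_mod_cast hij
      linarith
    have hUnion := hmono.measure_iUnion (μ := μ)
    have heach : ∀ n : ℕ, μ {ω | X ω ≤ q - 1/((n:ℝ)+1)} ≤ ENNReal.ofReal c := by
      intro n
      have hpos : (0:ℝ) < 1/((n:ℝ)+1) := by positivity
      have hnotQ : q - 1/((n:ℝ)+1) ∉ Q :=
        fun hmem => absurd (csInf_le hQbdd hmem) (by rw [← hq]; linarith)
      have : Fr (q - 1/((n:ℝ)+1)) < c := by
        by_contra hge
        push_neg at hge
        exact hnotQ hge
      rw [ENNReal.le_ofReal_iff_toReal_le (hfin _) hc0.le]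
      exact this.le
    have : μ {ω | X ω < q} ≤ ENNReal.ofReal c := by
      rw [hset, hUnion]
      exact iSup_le heach
    rw [← ENNReal.le_ofReal_iff_toReal_le (hfin _) hc0.le]
    exact this

lemma aux_gc_det (k : ℕ) (hk : 2 ≤ k) (q : ℕ → ℝ) (F G Φ Γ : ℝ → ℝ) (η : ℝ) (hη : 0 ≤ η)
    (hFq : ∀ j ∈ Finset.Icc 1 (k-1), (j:ℝ)/k ≤ F (q j))
    (hGq : ∀ j ∈ Finset.Icc 1 (k-1), G (q j) ≤ (j:ℝ)/k)
    (hFG : ∀ x y : ℝ, x < y → F x ≤ G y)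
    (hFmono : Monotone F) (hF0 : ∀ x, 0 ≤ F x) (hF1 : ∀ x, F x ≤ 1)
    (hPG : ∀ x y : ℝ, x < y → Φ x ≤ Γ y)
    (hΦmono : Monotone Φ) (hΦ0 : ∀ x, 0 ≤ Φ x) (hΦ1 : ∀ x, Φ x ≤ 1)
    (hA : ∀ j ∈ Finset.Icc 1 (k-1), |Φ (q j) - F (q j)| ≤ η)
    (hB : ∀ j ∈ Finset.Icc 1 (k-1), |Γ (q j) - G (q j)| ≤ η)
    (x : ℝ) : |Φ x - F x| ≤ 1/k + 2*η := by
  classical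
  have hkpos : (0:ℝ) < k := by positivity
  set P : Finset ℕ := (Finset.Icc 1 (k-1)).filter (fun i => q i ≤ x) with hP
  by_cases hPne : P.Nonempty
  · set j := P.max' hPne with hj
    have hjP : j ∈ P := P.max'_mem hPne
    have hjIcc : j ∈ Finset.Icc 1 (k-1) := (Finset.mem_filter.1 hjP).1
    have hqjx : q j ≤ x := (Finset.mem_filter.1 hjP).2
    have hjb : 1 ≤ j ∧ j ≤ k - 1 := by
      rw [Finset.mem_Icc] at hjIcc; exact hjIcc
    have hΦlow : (j:ℝ)/k - η ≤ Φ x := by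
      have h1 := hA j hjIcc
      rw [abs_le] at h1
      have h2 := hFq j hjIcc
      have h3 : Φ (q j) ≤ Φ x := hΦmono hqjx
      linarith
    have hFlow : (j:ℝ)/k ≤ F x := le_trans (hFq j hjIcc) (hFmono hqjx)
    by_cases hjtop : j = k - 1
    · -- top cell
      have hcast : ((j:ℝ)) = (k:ℝ) - 1 := by
        rw [hjtop, Nat.cast_sub (by omega)]; simp
      have h5 : ((k:ℝ)-1)/k = 1 - 1/k := by field_simp
      rw [hcast, h5] at hFlow hΦlow
      rw [abs_le]
      exact ⟨by linarith [hF1 x], by linarith [hΦ1 x]⟩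
    · -- intermediate cell
      have hj1 : j + 1 ∈ Finset.Icc 1 (k-1) := by
        rw [Finset.mem_Icc]
        omega
      have hj1notP : j + 1 ∉ P := fun hmem => by
        have := P.le_max' (j+1) hmem
        omega
      have hxlt : x < q (j+1) := by
        by_contra hge
        push_neg at hge
        exact hj1notP (Finset.mem_filter.2 ⟨hj1, hge⟩)
      have hΦup : Φ x ≤ ((j:ℝ)+1)/k + η := by
        have h1 := hPG x (q (j+1)) hxlt
        have h2 := hB (j+1) hj1
        rw [abs_le] at h2
        have h3 := hGq (j+1) hj1
        push_cast at h3
        linarith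
      have hFup : F x ≤ ((j:ℝ)+1)/k := by
        have h1 := hFG x (q (j+1)) hxlt
        have h3 := hGq (j+1) hj1
        push_cast at h3
        linarith
      have hsplit : ((j:ℝ)+1)/k = (j:ℝ)/k + 1/k := by field_simp
      rw [abs_le]
      constructor <;> [skip; skip] <;> (rw [hsplit] at hΦup hFup; try linarith)
  · -- below all grid points: x < q 1
    have h1Icc : (1:ℕ) ∈ Finset.Icc 1 (k-1) := by
      rw [Finset.mem_Icc]; omega
    have hxlt : x < q 1 := by
      by_contra hge
      push_neg at hge
      exact hPne ⟨1, Finset.mem_filter.2 ⟨h1Icc, hge⟩⟩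
    have hΦup : Φ x ≤ (1:ℝ)/k + η := by
      have h1 := hPG x (q 1) hxlt
      have h2 := hB 1 h1Icc
      rw [abs_le] at h2
      have h3 := hGq 1 h1Icc
      push_cast at h3
      linarith
    have hFup : F x ≤ (1:ℝ)/k := by
      have h1 := hFG x (q 1) hxlt
      have h3 := hGq 1 h1Icc
      push_cast at h3
      linarith
    have := hΦ0 x
    have := hF0 x
    rw [abs_le]
    constructor <;> linarith

/-- stability of segment empirical distribution functions under `o_P`
perturbations of the segment endpoints, and the resulting uniform Glivenko–Cantelli
consistency: `sup_x |F̂_{â,b̂}(x) − F̂_{a,b}(x)| = o_P(1)` and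
`sup_x |F̂_{â,b̂}(x) − F(x)| = o_P(1)`. -/
theorem empirical_df_endpoint_stability
    {Ω : Type*} [MeasurableSpace Ω] (μ : Measure Ω) [IsProbabilityMeasure μ]
    (ε : ℕ → Ω → ℝ)
    (hmeas : ∀ t, Measurable (ε t))
    (hindep : iIndepFun ε μ)
    (hident : ∀ t, IdentDistrib (ε t) (ε 0) μ μ)
    (F : ℝ → ℝ) (hF : ∀ x, F x = (μ {ω | ε 0 ω ≤ x}).toReal)
    (a b : ℕ → ℕ) (hab : ∀ n, a n < b n)
    (hlen : Filter.Tendsto (fun n => (b n : ℝ) - a n) Filter.atTop Filter.atTop)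
    (ahat bhat : ℕ → Ω → ℕ)
    (Fhat : ℕ → ℕ → ℝ → Ω → ℝ)
    (hFhat : ∀ s e x ω, Fhat s e x ω =
      ((e : ℝ) - s)⁻¹ * ∑ t ∈ Finset.Icc (s + 1) e, (if ε t ω ≤ x then (1 : ℝ) else 0))
    (hoP : ∀ δ : ℝ, 0 < δ →
      Filter.Tendsto (fun n => μ {ω |
          |(ahat n ω : ℝ) - a n| + |(bhat n ω : ℝ) - b n| > δ * ((b n : ℝ) - a n)})
        Filter.atTop (nhds 0)) :
    (∀ δ : ℝ, 0 < δ →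
      Filter.Tendsto (fun n => μ {ω | ∃ x : ℝ,
          |Fhat (ahat n ω) (bhat n ω) x ω - Fhat (a n) (b n) x ω| > δ})
        Filter.atTop (nhds 0)) ∧
    (∀ δ : ℝ, 0 < δ →
      Filter.Tendsto (fun n => μ {ω | ∃ x : ℝ,
          |Fhat (ahat n ω) (bhat n ω) x ω - F x| > δ})
        Filter.atTop (nhds 0)) := by
  classical
  have hfin : ∀ s : Set Ω, μ s ≠ ⊤ := fun s => measure_ne_top μ s
  -- Part 1 : endpoint perturbation stability
  have part1 : ∀ δ : ℝ, 0 < δ →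
      Filter.Tendsto (fun n => μ {ω | ∃ x : ℝ,
          |Fhat (ahat n ω) (bhat n ω) x ω - Fhat (a n) (b n) x ω| > δ})
        Filter.atTop (nhds 0) := by
    intro δ hδ
    set δ' : ℝ := min (δ/3) (1/3) with hδ'def
    have hδ'pos : 0 < δ' := lt_min (by linarith) (by norm_num)
    have hδ'le : δ' ≤ 1/3 := min_le_right _ _
    have h3δ' : 3 * δ' ≤ δ := by
      have := min_le_left (δ/3) (1/3)
      rw [hδ'def]
      linarith
    refine tendsto_of_tendsto_of_tendsto_of_le_of_le tendsto_const_nhds (hoP δ' hδ'pos)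
      (fun n => zero_le) (fun n => measure_mono ?_)
    intro ω hω
    simp only [Set.mem_setOf_eq] at hω ⊢
    by_contra hcon
    push_neg at hcon
    obtain ⟨x, hx⟩ := hω
    have hb01 : ∀ t, 0 ≤ (if ε t ω ≤ x then (1:ℝ) else 0) := by
      intro t; split_ifs <;> norm_num
    have hb11 : ∀ t, (if ε t ω ≤ x then (1:ℝ) else 0) ≤ 1 := by
      intro t; split_ifs <;> norm_num
    have hper := aux_pert (fun t => if ε t ω ≤ x then (1:ℝ) else 0) hb01 hb11
      (a n) (b n) (ahat n ω) (bhat n ω) (hab n) δ' hδ'pos hδ'le hcon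
    rw [hFhat, hFhat] at hx
    exact absurd hx (not_lt.2 (hper.trans h3δ'))
  -- basic facts about F and G
  have hFmono : Monotone F := by
    intro x y hxy
    rw [hF x, hF y]
    exact ENNReal.toReal_mono (hfin _) (measure_mono fun ω (h : ε 0 ω ≤ x) => h.trans hxy)
  have hF0 : ∀ x, 0 ≤ F x := fun x => by rw [hF]; exact ENNReal.toReal_nonneg
  have hF1 : ∀ x, F x ≤ 1 := fun x => by
    rw [hF]
    exact ENNReal.toReal_le_of_le_ofReal zero_le_one (by simpa using prob_le_one)
  set G : ℝ → ℝ := fun y => (μ {ω | ε 0 ω < y}).toReal with hGdef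
  have hFG : ∀ x y : ℝ, x < y → F x ≤ G y := by
    intro x y hxy
    rw [hF x]
    exact ENNReal.toReal_mono (hfin _)
      (measure_mono fun ω (h : ε 0 ω ≤ x) => lt_of_le_of_lt h hxy)
  -- Glivenko-Cantelli along the deterministic windows
  have hGC : ∀ δ : ℝ, 0 < δ →
      Filter.Tendsto (fun n => μ {ω | ∃ x : ℝ,
          |Fhat (a n) (b n) x ω - F x| > δ}) Filter.atTop (nhds 0) := by
    intro δ hδ
    obtain ⟨k, hk2, hkδ⟩ : ∃ k : ℕ, 2 ≤ k ∧ (1:ℝ)/k ≤ δ/4 := by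
      refine ⟨max 2 (⌈4/δ⌉₊ + 1), le_max_left _ _, ?_⟩
      set k := max 2 (⌈4/δ⌉₊ + 1) with hkdef
      have h1 : (4:ℝ)/δ ≤ ⌈4/δ⌉₊ := Nat.le_ceil _
      have h2 : ((⌈4/δ⌉₊ + 1 : ℕ):ℝ) ≤ (k:ℝ) := by
        exact_mod_cast le_max_right 2 (⌈4/δ⌉₊ + 1)
      have hkpos : (0:ℝ) < (k:ℝ) := by
        have : (2:ℕ) ≤ k := le_max_left _ _
        have : (2:ℝ) ≤ (k:ℝ) := by exact_mod_cast this
        linarith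
      rw [div_le_div_iff₀ hkpos (by norm_num)]
      push_cast at h2
      have h4 : δ * (4/δ) = 4 := by field_simp
      nlinarith
    have hkpos : (0:ℝ) < k := by
      have : (2:ℝ) ≤ (k:ℝ) := by exact_mod_cast hk2
      linarith
    set η : ℝ := δ/4 with hηdef
    have hηpos : 0 < η := by rw [hηdef]; linarith
    -- quantiles
    have hquant : ∀ j : ℕ, j ∈ Finset.Icc 1 (k-1) → ∃ qj : ℝ,
        (j:ℝ)/k ≤ F qj ∧ (μ {ω | ε 0 ω < qj}).toReal ≤ (j:ℝ)/k := by
      intro j hj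
      rw [Finset.mem_Icc] at hj
      have hj1 : (1:ℝ) ≤ (j:ℝ) := by exact_mod_cast hj.1
      have hc0 : (0:ℝ) < (j:ℝ)/k := by positivity
      have hc1 : (j:ℝ)/k < 1 := by
        rw [div_lt_one hkpos]
        exact_mod_cast (by omega : j < k)
      obtain ⟨qj, h1, h2⟩ := exists_quantile μ (ε 0) (hmeas 0) ((j:ℝ)/k) hc0 hc1
      exact ⟨qj, by rw [hF]; exact h1, h2⟩
    choose! qf hq1 hq2 using hquant
    -- events at the grid points
    set A : ℕ → ℕ → Set Ω := fun j n =>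
      {ω | |((b n:ℝ) - a n)⁻¹ * (∑ t ∈ Finset.Icc (a n + 1) (b n),
        (Set.Iic (qf j)).indicator (fun _ => (1:ℝ)) (ε t ω)) - F (qf j)| > η} with hAdef
    set B : ℕ → ℕ → Set Ω := fun j n =>
      {ω | |((b n:ℝ) - a n)⁻¹ * (∑ t ∈ Finset.Icc (a n + 1) (b n),
        (Set.Iio (qf j)).indicator (fun _ => (1:ℝ)) (ε t ω)) - G (qf j)| > η} with hBdef
    -- event inclusion per n
    have hbound : ∀ n, μ {ω | ∃ x : ℝ, |Fhat (a n) (b n) x ω - F x| > δ}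
        ≤ ∑ j ∈ Finset.Icc 1 (k-1), (μ (A j n) + μ (B j n)) := by
      intro n
      have hmn : (0:ℝ) < (b n:ℝ) - a n := by
        have : (a n : ℝ) < b n := by exact_mod_cast hab n
        linarith
      have hincl : {ω | ∃ x : ℝ, |Fhat (a n) (b n) x ω - F x| > δ}
          ⊆ ⋃ j ∈ Finset.Icc 1 (k-1), (A j n ∪ B j n) := by
        intro ω hω
        simp only [Set.mem_setOf_eq] at hω
        by_contra hnot
        simp only [Set.mem_iUnion, Set.mem_union, not_exists, not_or] at hnot
        obtain ⟨x, hx⟩ := hω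
        set m : ℝ := (b n:ℝ) - a n with hmdef
        set Φ : ℝ → ℝ := fun y => Fhat (a n) (b n) y ω with hΦdef
        set Γ : ℝ → ℝ := fun y => m⁻¹ * (∑ t ∈ Finset.Icc (a n + 1) (b n),
          (Set.Iio y).indicator (fun _ => (1:ℝ)) (ε t ω)) with hΓdef
        have hΦeq : ∀ y, Φ y = m⁻¹ * (∑ t ∈ Finset.Icc (a n + 1) (b n),
            if ε t ω ≤ y then (1:ℝ) else 0) := fun y => hFhat _ _ y ω
        have hcard : ((Finset.Icc (a n + 1) (b n)).card : ℝ) = m := by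
          rw [Nat.card_Icc]
          have h1 : b n + 1 - (a n + 1) = b n - a n := by omega
          rw [h1, Nat.cast_sub (hab n).le, hmdef]
        have hsum01 : ∀ (w : ℕ → ℝ), (∀ t, 0 ≤ w t) → (∀ t, w t ≤ 1) →
            0 ≤ m⁻¹ * (∑ t ∈ Finset.Icc (a n + 1) (b n), w t) ∧
            m⁻¹ * (∑ t ∈ Finset.Icc (a n + 1) (b n), w t) ≤ 1 := by
          intro w hw0 hw1
          constructor
          · exact mul_nonneg (inv_nonneg.2 hmn.le)
              (Finset.sum_nonneg fun t _ => hw0 t)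
          · have hle : (∑ t ∈ Finset.Icc (a n + 1) (b n), w t) ≤ m := by
              have := Finset.sum_le_card_nsmul (Finset.Icc (a n + 1) (b n)) w 1
                (fun t _ => hw1 t)
              simp only [nsmul_eq_mul, mul_one] at this
              rw [hcard] at this
              exact this
            calc m⁻¹ * (∑ t ∈ Finset.Icc (a n + 1) (b n), w t) ≤ m⁻¹ * m :=
                mul_le_mul_of_nonneg_left hle (inv_nonneg.2 hmn.le)
              _ = 1 := inv_mul_cancel₀ hmn.ne'
        have hind_le : ∀ (u v : Prop) (_ : Decidable u) (_ : Decidable v), (u → v) →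
            (if u then (1:ℝ) else 0) ≤ (if v then (1:ℝ) else 0) := by
          intro u v _ _ huv
          split_ifs with h1 h2
          · exact le_refl 1
          · exact absurd (huv h1) h2
          · norm_num
          · norm_num
        have hΦmono : Monotone Φ := by
          intro x1 y1 hxy
          rw [hΦeq, hΦeq]
          refine mul_le_mul_of_nonneg_left (Finset.sum_le_sum fun t _ => ?_)
            (inv_nonneg.2 hmn.le)
          exact hind_le _ _ _ _ (fun h => h.trans hxy)
        have hΦ0 : ∀ y, 0 ≤ Φ y := by
          intro y; rw [hΦeq]
          exact (hsum01 _ (fun t => by split_ifs <;> norm_num)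
            (fun t => by split_ifs <;> norm_num)).1
        have hΦ1 : ∀ y, Φ y ≤ 1 := by
          intro y; rw [hΦeq]
          exact (hsum01 _ (fun t => by split_ifs <;> norm_num)
            (fun t => by split_ifs <;> norm_num)).2
        have hPG : ∀ x1 y1 : ℝ, x1 < y1 → Φ x1 ≤ Γ y1 := by
          intro x1 y1 hxy
          rw [hΦeq, hΓdef]
          refine mul_le_mul_of_nonneg_left (Finset.sum_le_sum fun t _ => ?_)
            (inv_nonneg.2 hmn.le)
          rw [Set.indicator_apply]
          simp only [Set.mem_Iio]
          exact hind_le _ _ _ _ (fun h => lt_of_le_of_lt h hxy)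
        have hA' : ∀ j ∈ Finset.Icc 1 (k-1), |Φ (qf j) - F (qf j)| ≤ η := by
          intro j hj
          have := (hnot j hj).1
          rw [hAdef] at this
          simp only [Set.mem_setOf_eq, not_lt] at this
          rw [hΦeq]
          have heq : (∑ t ∈ Finset.Icc (a n + 1) (b n),
              (Set.Iic (qf j)).indicator (fun _ => (1:ℝ)) (ε t ω))
              = ∑ t ∈ Finset.Icc (a n + 1) (b n), if ε t ω ≤ qf j then (1:ℝ) else 0 := by
            refine Finset.sum_congr rfl fun t _ => ?_
            rw [Set.indicator_apply]
            simp only [Set.mem_Iic]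
          rw [← heq]
          exact this
        have hB' : ∀ j ∈ Finset.Icc 1 (k-1), |Γ (qf j) - G (qf j)| ≤ η := by
          intro j hj
          have := (hnot j hj).2
          rw [hBdef] at this
          simp only [Set.mem_setOf_eq, not_lt] at this
          rw [hΓdef]
          exact this
        have hdet := aux_gc_det k hk2 qf F G Φ Γ η hηpos.le hq1 hq2 hFG hFmono hF0 hF1
          hPG hΦmono hΦ0 hΦ1 hA' hB' x
        have : |Φ x - F x| ≤ δ := by
          calc |Φ x - F x| ≤ 1/k + 2*η := hdet
            _ ≤ δ/4 + 2*(δ/4) := by rw [hηdef]; linarith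
            _ ≤ δ := by linarith
        rw [hΦdef] at this
        exact absurd hx (not_lt.2 this)
      calc μ {ω | ∃ x : ℝ, |Fhat (a n) (b n) x ω - F x| > δ}
          ≤ μ (⋃ j ∈ Finset.Icc 1 (k-1), (A j n ∪ B j n)) := measure_mono hincl
        _ ≤ ∑ j ∈ Finset.Icc 1 (k-1), μ (A j n ∪ B j n) :=
            measure_biUnion_finset_le _ _
        _ ≤ ∑ j ∈ Finset.Icc 1 (k-1), (μ (A j n) + μ (B j n)) :=
            Finset.sum_le_sum fun j _ => measure_union_le _ _
    -- each grid point event tends to zero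
    have hc_tend : Filter.Tendsto
        (fun n => ENNReal.ofReal (((b n:ℝ) - a n)⁻¹ * η⁻¹ * η⁻¹)) Filter.atTop (nhds 0) := by
      have h1 : Filter.Tendsto (fun n => ((b n:ℝ) - a n)⁻¹) Filter.atTop (nhds 0) :=
        tendsto_inv_atTop_zero.comp hlen
      have h2 : Filter.Tendsto (fun n => ((b n:ℝ) - a n)⁻¹ * η⁻¹ * η⁻¹)
          Filter.atTop (nhds 0) := by
        have := (h1.mul_const (η⁻¹)).mul_const (η⁻¹)
        simpa using this
      have := ENNReal.tendsto_ofReal h2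
      simpa using this
    have hA_t : ∀ j ∈ Finset.Icc 1 (k-1),
        Filter.Tendsto (fun n => μ (A j n)) Filter.atTop (nhds 0) := by
      intro j hj
      refine tendsto_of_tendsto_of_tendsto_of_le_of_le tendsto_const_nhds hc_tend
        (fun n => zero_le) (fun n => ?_)
      have hp : ∀ t, (μ (ε t ⁻¹' Set.Iic (qf j))).toReal = F (qf j) := by
        intro t
        rw [(hident t).measure_mem_eq measurableSet_Iic, hF]
        congr 1
      exact aux_cheb μ ε hmeas hindep (Set.Iic (qf j)) measurableSet_Iic (F (qf j)) hp
        (a n) (b n) (hab n) η hηpos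
    have hB_t : ∀ j ∈ Finset.Icc 1 (k-1),
        Filter.Tendsto (fun n => μ (B j n)) Filter.atTop (nhds 0) := by
      intro j hj
      refine tendsto_of_tendsto_of_tendsto_of_le_of_le tendsto_const_nhds hc_tend
        (fun n => zero_le) (fun n => ?_)
      have hp : ∀ t, (μ (ε t ⁻¹' Set.Iio (qf j))).toReal = G (qf j) := by
        intro t
        rw [(hident t).measure_mem_eq measurableSet_Iio, hGdef]
        congr 1
      exact aux_cheb μ ε hmeas hindep (Set.Iio (qf j)) measurableSet_Iio (G (qf j)) hp
        (a n) (b n) (hab n) η hηpos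
    have hsum_t : Filter.Tendsto
        (fun n => ∑ j ∈ Finset.Icc 1 (k-1), (μ (A j n) + μ (B j n)))
        Filter.atTop (nhds 0) := by
      have := tendsto_finset_sum (Finset.Icc 1 (k-1))
        (fun j hj => (hA_t j hj).add (hB_t j hj))
      simpa using this
    exact tendsto_of_tendsto_of_tendsto_of_le_of_le tendsto_const_nhds hsum_t
      (fun n => zero_le) hbound
  -- combine
  refine ⟨part1, ?_⟩
  intro δ hδ
  have h1 := part1 (δ/2) (by linarith)
  have h2 := hGC (δ/2) (by linarith)
  have hsum := h1.add h2
  simp only [add_zero] at hsum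
  refine tendsto_of_tendsto_of_tendsto_of_le_of_le tendsto_const_nhds hsum
    (fun n => zero_le) (fun n => ?_)
  calc μ {ω | ∃ x : ℝ, |Fhat (ahat n ω) (bhat n ω) x ω - F x| > δ}
      ≤ μ ({ω | ∃ x : ℝ, |Fhat (ahat n ω) (bhat n ω) x ω - Fhat (a n) (b n) x ω| > δ/2}
          ∪ {ω | ∃ x : ℝ, |Fhat (a n) (b n) x ω - F x| > δ/2}) := by
        refine measure_mono ?_
        intro ω hω
        obtain ⟨x, hx⟩ := hω
        by_contra hnot
        simp only [Set.mem_union, Set.mem_setOf_eq, not_or, not_exists, not_lt] at hnot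
        have := abs_sub_le (Fhat (ahat n ω) (bhat n ω) x ω) (Fhat (a n) (b n) x ω) (F x)
        have h1' := hnot.1 x
        have h2' := hnot.2 x
        linarith
    _ ≤ μ {ω | ∃ x : ℝ, |Fhat (ahat n ω) (bhat n ω) x ω - Fhat (a n) (b n) x ω| > δ/2}
        + μ {ω | ∃ x : ℝ, |Fhat (a n) (b n) x ω - F x| > δ/2} := measure_union_le _ _
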